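/- arXiv:1102.5101 — 2 statements merged into one kernel-verified Lean document; each statement's English description precedes it below -/
import Mathlib

section
/- Let (R, m) be a Noetherian local domain, J an integrally closed m-primary ideal of R, u an element of (J : m) not in J, and set I = (J, u). Then for any finitely generated torsion-free R-module M, the length of IM/JM is at least the rank of M. -/
/- Common definitions for the formalization of
   "Bounds on the Hilbert-Kunz Multiplicity" (Celikbas–Dao–Huneke–Zhang). -/

open IsLocalRing Filter Polynomial

namespace HKPaper

universe u

variable (R : Type u) [CommRing R]

/-- The length of an `R`-module `M`: the supremum of lengths of strictly
increasing chains of submodules. -/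
noncomputable def mLength (M : Type u) [AddCommGroup M] [Module R M] : ℕ∞ :=
  (Set.univ : Set (Submodule R M)).chainHeight (· < ·)

/-- The generic rank of a module over a domain:
`dim_{Frac R} (M ⊗_R Frac R)`. -/
noncomputable def genRank [IsDomain R] (M : Type u) [AddCommGroup M] [Module R M] : ℕ :=
  Module.finrank (FractionRing R) (LocalizedModule (nonZeroDivisors R) M)

/-- `x` is integral over the ideal `I`: it satisfies an equation
`x ^ n + a 1 * x ^ (n-1) + ⋯ + a n = 0` with `a i ∈ I ^ i`. -/
def IsIntegralOverIdeal (I : Ideal R) (x : R) : Prop :=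
  ∃ n : ℕ, 0 < n ∧ ∃ a : ℕ → R, (∀ i, 1 ≤ i → i ≤ n → a i ∈ I ^ i) ∧
    x ^ n + ∑ i ∈ Finset.Icc 1 n, a i * x ^ (n - i) = 0

/-- An ideal is integrally closed if it contains every element integral over it. -/
def IdealIsIntegrallyClosed (I : Ideal R) : Prop :=
  ∀ x : R, IsIntegralOverIdeal R I x → x ∈ I

/-- `I` is primary for the maximal ideal of a local ring. -/
def IsMPrimary [IsLocalRing R] (I : Ideal R) : Prop :=
  I.radical = maximalIdeal R

/-- Minimal number of generators of a submodule. -/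
noncomputable def minGen {M : Type u} [AddCommGroup M] [Module R M] (N : Submodule R M) : ℕ :=
  sInf {n : ℕ | ∃ s : Finset M, s.card = n ∧ Submodule.span R (↑s : Set M) = N}

/-- The quotient `P/Q` of two submodules (`Q ∩ P` is divided out) as a module. -/
abbrev subQuot {M : Type u} [AddCommGroup M] [Module R M] (P Q : Submodule R M) : Type u :=
  ↥P ⧸ (Q.comap P.subtype)

/-- The Frobenius power `I^{[q]}`: the ideal generated by `q`-th powers of elements of `I`. -/
def frobPow (I : Ideal R) (q : ℕ) : Ideal R :=
  Ideal.span ((fun x => x ^ q) '' (I : Set R))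

/-- The sequence `ℓ(R/I^{[p^e]})/p^{ed}` whose limit is the Hilbert–Kunz multiplicity. -/
noncomputable def hkSeq (p d : ℕ) (I : Ideal R) (e : ℕ) : ℝ :=
  ((mLength R (R ⧸ frobPow R I (p ^ e))).toNat : ℝ) / (p : ℝ) ^ (e * d)

/-- `c` is the Hilbert–Kunz multiplicity of `I` (characteristic `p`, dimension `d`). -/
def IsHKMult (p d : ℕ) (I : Ideal R) (c : ℝ) : Prop :=
  Tendsto (hkSeq R p d I) atTop (nhds c)

/-- `c` is the Hilbert–Samuel multiplicity of `I` (dimension `d`). -/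
def IsHSMult (d : ℕ) (I : Ideal R) (c : ℝ) : Prop :=
  Tendsto (fun n : ℕ =>
    (d.factorial : ℝ) * ((mLength R (R ⧸ I ^ n)).toNat : ℝ) / (n : ℝ) ^ d) atTop (nhds c)

/-- `J` is a reduction of `I`. -/
def IsReduction (J I : Ideal R) : Prop :=
  J ≤ I ∧ ∃ k : ℕ, I ^ (k + 1) = J * I ^ k

/-- A list of elements is a system of parameters of a local ring. -/
def IsSOP [IsLocalRing R] (xs : List R) : Prop :=
  (xs.length : WithBot ℕ∞) = ringKrullDim R ∧ (∀ x ∈ xs, x ∈ maximalIdeal R) ∧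
    IsMPrimary R (Ideal.span {x | x ∈ xs})

/-- A list of elements generating a minimal reduction of the maximal ideal. -/
def IsMinimalReduction [IsLocalRing R] (xs : List R) : Prop :=
  IsSOP R xs ∧ IsReduction R (Ideal.span {x | x ∈ xs}) (maximalIdeal R)

/-- `xs` is a regular sequence on `R/I`. -/
def IsRegSeqOn : List R → Ideal R → Prop
  | [], _ => True
  | x :: xs, I => (∀ r : R, x * r ∈ I → r ∈ I) ∧ IsRegSeqOn xs (I ⊔ Ideal.span {x})

/-- A local ring is Cohen–Macaulay: some system of parameters is a regular sequence. -/
def IsCM [IsLocalRing R] : Prop :=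
  ∃ xs : List R, IsSOP R xs ∧ IsRegSeqOn R xs ⊥

/-- A local ring is Gorenstein: it is Cohen–Macaulay and the socle of an Artinian
reduction is one-dimensional, expressed via `ℓ(R/(xs:m)) + 1 = ℓ(R/(xs))`. -/
def IsGorenstein [IsLocalRing R] : Prop :=
  ∃ xs : List R, IsSOP R xs ∧ IsRegSeqOn R xs ⊥ ∧
    mLength R (R ⧸ (Submodule.colon (Ideal.span {x | x ∈ xs}) (maximalIdeal R))) + 1 =
      mLength R (R ⧸ Ideal.span {x | x ∈ xs})

/-- A local ring is regular: the maximal ideal is generated by `dim R` elements. -/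
def IsRegularLocal [IsLocalRing R] : Prop :=
  ((minGen R (maximalIdeal R) : ℕ∞) : WithBot ℕ∞) = ringKrullDim R

/-- `x` lies in the tight closure of `I`. -/
def InTightClosure (p : ℕ) (I : Ideal R) (x : R) : Prop :=
  ∃ c : R, (∀ P ∈ minimalPrimes R, c ∉ P) ∧
    ∃ e₀ : ℕ, ∀ e ≥ e₀, c * x ^ p ^ e ∈ frobPow R I (p ^ e)

/-- `R` is weakly F-regular: every ideal is tightly closed. -/
def IsWeaklyFRegular (p : ℕ) : Prop :=
  ∀ (I : Ideal R) (x : R), InTightClosure R p I x → x ∈ I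

/-- `R` is F-finite: the Frobenius endomorphism is module-finite. -/
def IsFFinite (p : ℕ) [ExpChar R p] : Prop :=
  (frobenius R p).Finite

/-- `R` viewed as a module over itself via the `e`-th iterate of Frobenius; for
`R` reduced F-finite with perfect residue field this is a model of `R^{1/p^e}`. -/
def FrobTwist (_p _e : ℕ) : Type u := R

instance (p e : ℕ) : AddCommGroup (FrobTwist R p e) :=
  inferInstanceAs (AddCommGroup R)

noncomputable instance (p e : ℕ) [ExpChar R p] : Module R (FrobTwist R p e) :=
  (Module.compHom R (iterateFrobenius R p e) : Module R R)

/-- The largest `n` such that `R^n` is a direct summand (equivalently, a linear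
surjective image) of `M`. -/
noncomputable def maxFreeRank (M : Type u) [AddCommGroup M] [Module R M] : ℕ :=
  sSup {n : ℕ | ∃ f : M →ₗ[R] (Fin n → R), Function.Surjective f}

/-- `s` is the F-signature of `R`: the limit of `a_q/q^d` where `a_q` is the maximal
rank of a free direct summand of `R^{1/q}`. -/
def IsFSignature (p d : ℕ) [ExpChar R p] (s : ℝ) : Prop :=
  Tendsto (fun e : ℕ =>
    (maxFreeRank R (FrobTwist R p e) : ℝ) / (p : ℝ) ^ (e * d)) atTop (nhds s)

/-- A maximal chain of primes between two fixed primes. -/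
def IsSaturatedChain {A : Type u} [CommRing A] (c : LTSeries (PrimeSpectrum A)) : Prop :=
  ∀ i : Fin c.length, ¬∃ r : PrimeSpectrum A, c.toFun i.castSucc < r ∧ r < c.toFun i.succ

/-- A ring is catenary: any two saturated chains of primes with the same endpoints
have the same length. -/
def IsCatenary (A : Type u) [CommRing A] : Prop :=
  ∀ c₁ c₂ : LTSeries (PrimeSpectrum A), c₁.head = c₂.head → c₁.last = c₂.last →
    IsSaturatedChain c₁ → IsSaturatedChain c₂ → c₁.length = c₂.length

/-- A (not necessarily local) ring is regular: Noetherian with all localizations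
at primes regular local rings. -/
def IsRegularRing (A : Type u) [CommRing A] : Prop :=
  IsNoetherianRing A ∧
    ∀ p : PrimeSpectrum A, IsRegularLocal (Localization.AtPrime p.asIdeal)

/-- An algebra over a field `k` is geometrically regular: it stays regular after
base change along every finite field extension of `k`. -/
def IsGeometricallyRegular (k A : Type u) [Field k] [CommRing A] [Algebra k A] : Prop :=
  ∀ (k' : Type u) [Field k'] [Algebra k k'] [Module.Finite k k'],
    IsRegularRing (TensorProduct k k' A)

/-- A Noetherian local ring is excellent: it is universally catenary and is a
G-ring, i.e. the formal fibers (the fibers of `R → R^`) are geometrically regular.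
(For Noetherian semi-local rings the J-2 condition follows from these.) -/
def IsExcellentLocal [IsLocalRing R] : Prop :=
  (∀ n : ℕ, IsCatenary (MvPolynomial (Fin n) R)) ∧
    ∀ p : PrimeSpectrum R,
      IsGeometricallyRegular (ResidueField (Localization.AtPrime p.asIdeal))
        (TensorProduct R (ResidueField (Localization.AtPrime p.asIdeal))
          (AdicCompletion (maximalIdeal R) R))

/-- A local ring is unmixed: every associated prime of the completion `R^` has
`dim R^/P = dim R`. -/
def IsUnmixed [IsLocalRing R] : Prop :=
  ∀ P ∈ associatedPrimes (AdicCompletion (maximalIdeal R) R)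
      (AdicCompletion (maximalIdeal R) R),
    ringKrullDim ((AdicCompletion (maximalIdeal R) R) ⧸ P) = ringKrullDim R


/-- A rank-one discrete valuation on a field `K` containing `S`, centered on the
ideal `mS` (in applications, the maximal ideal of the local ring `S`). -/
structure CenteredDValuation (S : Type u) [CommRing S] (mS : Ideal S)
    (K : Type u) [Field K] [Algebra S K] where
  v : K → WithTop ℤ
  map_mul' : ∀ a b : K, v (a * b) = v a + v b
  add_ge' : ∀ a b : K, min (v a) (v b) ≤ v (a + b)
  map_one' : v 1 = 0
  map_zero' : v 0 = ⊤
  ne_top' : ∀ a : K, a ≠ 0 → v a ≠ ⊤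
  nonneg' : ∀ s : S, 0 ≤ v (algebraMap S K s)
  pos' : ∀ s ∈ mS, 0 < v (algebraMap S K s)


section AuxProp21
open HKPaper

/-- Pull back membership in `J • 𝔟` to the submodule `𝔟` viewed as a module. -/
lemma aux_mem_smul_top {R M : Type} [CommRing R] [AddCommGroup M] [Module R M]
    (𝔟 : Submodule R M) (J : Ideal R) (x : ↥𝔟) (h : (x : M) ∈ J • 𝔟) :
    x ∈ J • (⊤ : Submodule R ↥𝔟) := by
  have h2 : J • 𝔟 = Submodule.map 𝔟.subtype (J • (⊤ : Submodule R ↥𝔟)) := by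
    rw [Submodule.map_smul'', Submodule.map_subtype_top]
  rw [h2] at h
  obtain ⟨y, hy, hxy⟩ := h
  have : y = x := Subtype.coe_injective hxy
  exact this ▸ hy

/-- The determinant trick: if `u • 𝔟 ⊆ J • 𝔟` for a nonzero ideal `𝔟` of a
Noetherian domain, then `u` is integral over `J`. -/
lemma aux_integral {R : Type} [CommRing R] [IsDomain R] [IsNoetherianRing R]
    (J : Ideal R) (u : R) (𝔟 : Ideal R) (hne : ∃ w ∈ 𝔟, w ≠ (0 : R))
    (hsm : ∀ w ∈ 𝔟, u * w ∈ J • 𝔟) : IsIntegralOverIdeal R J u := by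
  have hfg : Module.Finite R ↥𝔟 := Module.Finite.iff_fg.mpr (IsNoetherian.noetherian 𝔟)
  set f : Module.End R ↥𝔟 := algebraMap R (Module.End R ↥𝔟) u with hf
  have hrange : LinearMap.range f ≤ J • (⊤ : Submodule R ↥𝔟) := by
    rintro _ ⟨z, rfl⟩
    apply aux_mem_smul_top
    have hfz : ((f z : ↥𝔟) : R) = u * (z : R) := by
      rw [hf, Module.algebraMap_end_apply]; rfl
    rw [hfz]
    exact hsm _ z.2
  obtain ⟨p, hmonic, -, hcoeff, heval⟩ :=
    LinearMap.exists_monic_and_coeff_mem_pow_and_aeval_eq_zero_of_range_le_smul R f J hrange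
  obtain ⟨w, hw, hwne⟩ := hne
  have heval' : p.eval u = 0 := by
    have h1 : Polynomial.aeval f p = algebraMap R (Module.End R ↥𝔟) (p.eval u) := by
      rw [hf, Polynomial.aeval_algebraMap_apply_eq_algebraMap_eval]
    have h2 := DFunLike.congr_fun (h1.symm.trans heval) (⟨w, hw⟩ : ↥𝔟)
    rw [Module.algebraMap_end_apply] at h2
    have h3 : p.eval u * w = 0 := by
      have := congrArg (Subtype.val) h2
      simpa [smul_eq_mul] using this
    rcases mul_eq_zero.mp h3 with h | h
    · exact h
    · exact absurd h hwne
  have hd : 0 < p.natDegree := by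
    rcases Nat.eq_zero_or_pos p.natDegree with h0 | h0
    · exfalso
      have : p = 1 := (Polynomial.Monic.natDegree_eq_zero hmonic).mp h0
      rw [this] at heval'
      simp at heval'
    · exact h0
  refine ⟨p.natDegree, hd, fun i => p.coeff (p.natDegree - i), fun i h1i hid => ?_, ?_⟩
  · have := hcoeff (p.natDegree - i)
    rwa [Nat.sub_sub_self hid] at this
  · have hsum : ∑ i ∈ Finset.Icc 1 p.natDegree,
        p.coeff (p.natDegree - i) * u ^ (p.natDegree - i)
        = ∑ k ∈ Finset.range p.natDegree, p.coeff k * u ^ k := by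
      refine Finset.sum_nbij' (fun i => p.natDegree - i) (fun k => p.natDegree - k)
        ?_ ?_ ?_ ?_ ?_
      · intro a ha
        simp only [Finset.mem_Icc] at ha
        simp only [Finset.mem_range]
        omega
      · intro a ha
        simp only [Finset.mem_range] at ha
        simp only [Finset.mem_Icc]
        omega
      · intro a ha
        simp only [Finset.mem_Icc] at ha
        show p.natDegree - (p.natDegree - a) = a
        omega
      · intro a ha
        simp only [Finset.mem_range] at ha
        show p.natDegree - (p.natDegree - a) = a
        omega
      · intro a _
        rfl
    rw [hsum]
    have hev := heval'
    rw [Polynomial.eval_eq_sum_range, Finset.sum_range_succ,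
      Polynomial.Monic.coeff_natDegree hmonic, one_mul] at hev
    rw [add_comm]
    exact hev

/-- Core step of Proposition 2.1: if `t < rank M`, then
`(JM :_M u) ⊔ span of t elements` is not all of `M`. -/
lemma aux_core {R : Type} [CommRing R] [IsNoetherianRing R] [IsDomain R]
    (J : Ideal R) (hJcl : IdealIsIntegrallyClosed R J) (u : R) (hunotJ : u ∉ J)
    (M : Type) [AddCommGroup M] [Module R M] [Module.Finite R M]
    (t : ℕ) (ht : t < genRank R M) (xs : Fin t → M) :
    Submodule.comap ((LinearMap.lsmul R M) u) (J • (⊤ : Submodule R M))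
      ⊔ Submodule.span R (Set.range xs) ≠ ⊤ := by
  intro hTop
  set S := nonZeroDivisors R with hS
  set K := FractionRing R with hK
  set V := LocalizedModule S M with hV
  set mkl : M →ₗ[R] V := LocalizedModule.mkLinearMap S M with hmkl
  -- the image of `M` spans `V` over `K`
  have hspan : Submodule.span K (Set.range mkl) = ⊤ := by
    rw [eq_top_iff]
    rintro v -
    induction v using LocalizedModule.induction_on with
    | h m s =>
      have h1 : (Localization.mk 1 s : K) • (LocalizedModule.mk m 1 : V)
          = LocalizedModule.mk m s := by
        rw [LocalizedModule.mk_smul_mk, one_smul, mul_one]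
      rw [← h1]
      exact Submodule.smul_mem _ _ (Submodule.subset_span ⟨m, rfl⟩)
  -- the span of the images of the `xs` is a proper subspace
  have hgen : genRank R M = Module.finrank K V := rfl
  have hWne : Submodule.span K (Set.range fun i => mkl (xs i)) ≠ ⊤ := by
    intro hW
    have hle := finrank_le_of_span_eq_top hW
    rw [Fintype.card_fin] at hle
    omega
  obtain ⟨x, hxW⟩ : ∃ x : V, x ∉ Submodule.span K (Set.range fun i => mkl (xs i)) := by
    by_contra h
    push_neg at h
    exact hWne (Submodule.eq_top_iff'.mpr h)
  obtain ⟨ψ, hψx, hψW⟩ :=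
    Submodule.exists_dual_map_eq_bot_of_notMem hxW inferInstance
  set φ₀ : M →ₗ[R] K := (ψ.restrictScalars R).comp mkl with hφ₀
  have hφ₀xs : ∀ i, φ₀ (xs i) = 0 := by
    intro i
    have hmem : mkl (xs i) ∈ Submodule.span K (Set.range fun i => mkl (xs i)) :=
      Submodule.subset_span ⟨i, rfl⟩
    have h0 : ψ (mkl (xs i)) ∈ Submodule.map ψ
        (Submodule.span K (Set.range fun i => mkl (xs i))) :=
      Submodule.mem_map_of_mem hmem
    rw [hψW, Submodule.mem_bot] at h0
    simpa [hφ₀] using h0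
  have hy : ∃ y : M, φ₀ y ≠ 0 := by
    by_contra h
    push_neg at h
    have hsub : Set.range mkl ⊆ (LinearMap.ker ψ : Set V) := by
      rintro _ ⟨y, rfl⟩
      exact h y
    have : (⊤ : Submodule K V) ≤ LinearMap.ker ψ := by
      rw [← hspan]
      exact Submodule.span_le.mpr hsub
    exact hψx (this trivial)
  -- clear denominators
  have hfgB : (LinearMap.range φ₀).FG := by
    rw [LinearMap.range_eq_map]
    exact Submodule.FG.map _ (Module.finite_def.mp inferInstance)
  obtain ⟨T, hT⟩ := hfgB
  obtain ⟨b, hb⟩ := IsLocalization.exist_integer_multiples_of_finset S T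
  set A : Submodule R K := LinearMap.range (Algebra.linearMap R K) with hA
  have hTA : ∀ v ∈ LinearMap.range φ₀, (b : R) • v ∈ A := by
    have hle : LinearMap.range φ₀ ≤ Submodule.comap ((LinearMap.lsmul R K) (b : R)) A := by
      rw [← hT, Submodule.span_le]
      intro a ha
      obtain ⟨r, hr⟩ := hb a ha
      exact ⟨r, by simpa [Algebra.linearMap_apply] using hr⟩
    intro v hv
    exact hle hv
  have hainj : Function.Injective (algebraMap R K) := IsFractionRing.injective R K
  have hinj : Function.Injective (Algebra.linearMap R K) := hainj
  set e : R ≃ₗ[R] ↥A := LinearEquiv.ofInjective (Algebra.linearMap R K) hinj with he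
  set g : M →ₗ[R] ↥A := LinearMap.codRestrict A (((LinearMap.lsmul R K) (b : R)).comp φ₀)
      (fun x => hTA _ (LinearMap.mem_range_self φ₀ x)) with hg
  set φ : M →ₗ[R] R := e.symm.toLinearMap.comp g with hφdef
  have hφ : ∀ z : M, algebraMap R K (φ z) = (b : R) • φ₀ z := by
    intro z
    have h1 : e (φ z) = g z := e.apply_symm_apply (g z)
    have h2 : ((e (φ z) : ↥A) : K) = algebraMap R K (φ z) := by
      rw [he]
      exact LinearEquiv.ofInjective_apply (Algebra.linearMap R K) (φ z)
    rw [← h2, h1]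
    rfl
  have hφxs : ∀ i, φ (xs i) = 0 := by
    intro i
    apply hainj
    rw [hφ, hφ₀xs i, smul_zero, map_zero]
  obtain ⟨y, hy⟩ := hy
  have hbR : (b : R) ≠ 0 := nonZeroDivisors.ne_zero b.2
  have hφy : φ y ≠ 0 := by
    intro h0
    apply hy
    have hz : (b : R) • φ₀ y = 0 := by rw [← hφ, h0, map_zero]
    rw [Algebra.smul_def] at hz
    rcases mul_eq_zero.mp hz with h | h
    · exact absurd h (fun hh => hainj.ne hbR (by rw [hh, map_zero]))
    · exact h
  -- the image ideal
  have h𝔟 : LinearMap.range φ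
      = Submodule.map φ (Submodule.comap ((LinearMap.lsmul R M) u) (J • ⊤)) := by
    conv_lhs => rw [LinearMap.range_eq_map, ← hTop]
    rw [Submodule.map_sup]
    have hz : Submodule.map φ (Submodule.span R (Set.range xs)) = ⊥ := by
      rw [Submodule.map_span, Submodule.span_eq_bot]
      rintro _ ⟨_, ⟨i, rfl⟩, rfl⟩
      exact hφxs i
    rw [hz, sup_bot_eq]
  have hsm : ∀ w ∈ LinearMap.range φ, u * w ∈ J • (LinearMap.range φ) := by
    intro w hw
    rw [h𝔟] at hw
    obtain ⟨z, hz, rfl⟩ := hw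
    have h1 : u * φ z = φ (u • z) := by rw [map_smul, smul_eq_mul]
    rw [h1]
    have h2 : φ (u • z) ∈ Submodule.map φ (J • (⊤ : Submodule R M)) :=
      Submodule.mem_map_of_mem hz
    rw [Submodule.map_smul''] at h2
    rwa [← LinearMap.range_eq_map] at h2
  exact hunotJ (hJcl u (aux_integral J u (LinearMap.range φ)
    ⟨φ y, LinearMap.mem_range_self _ y, hφy⟩ hsm))

/-- Finset version of the core step. -/
lemma aux_core' {R : Type} [CommRing R] [IsNoetherianRing R] [IsDomain R]
    (J : Ideal R) (hJcl : IdealIsIntegrallyClosed R J) (u : R) (hunotJ : u ∉ J)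
    (M : Type) [AddCommGroup M] [Module R M] [Module.Finite R M]
    (s : Finset M) (hs : s.card < genRank R M) :
    Submodule.comap ((LinearMap.lsmul R M) u) (J • (⊤ : Submodule R M))
      ⊔ Submodule.span R (↑s : Set M) ≠ ⊤ := by
  have hrange : Set.range (fun i => ((s.equivFin.symm i : {x // x ∈ s}) : M)) = (↑s : Set M) := by
    ext z
    constructor
    · rintro ⟨i, rfl⟩
      exact Finset.mem_coe.mpr (s.equivFin.symm i).2
    · intro hz
      exact ⟨s.equivFin ⟨z, Finset.mem_coe.mp hz⟩, by simp⟩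
  have := aux_core J hJcl u hunotJ M s.card hs
    (fun i => ((s.equivFin.symm i : {x // x ∈ s}) : M))
  rwa [hrange] at this

/-- Greedy construction of a strictly increasing chain of submodules above `N`. -/
lemma aux_chain {R M : Type} [CommRing R] [AddCommGroup M] [Module R M]
    (N : Submodule R M) (n : ℕ)
    (hcore : ∀ s : Finset M, s.card < n → N ⊔ Submodule.span R (↑s : Set M) ≠ ⊤) :
    ∀ i ≤ n, ∃ (c : List (Submodule R M)) (s : Finset M), c.length = i + 1 ∧
      List.Chain' (fun P Q => N ≤ P ∧ P < Q) c ∧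
      c.getLast? = some (N ⊔ Submodule.span R (↑s : Set M)) ∧ s.card ≤ i := by
  intro i
  induction i with
  | zero =>
    intro _
    refine ⟨[N], ∅, rfl, List.isChain_singleton _, ?_, le_refl 0⟩
    simp
  | succ i ih =>
    intro hi1
    obtain ⟨c, s, hlen, hch, hlast, hcard⟩ := ih (Nat.le_of_succ_le hi1)
    have hne : N ⊔ Submodule.span R (↑s : Set M) ≠ ⊤ :=
      hcore s (lt_of_le_of_lt hcard hi1)
    obtain ⟨x, hx⟩ : ∃ x, x ∉ N ⊔ Submodule.span R (↑s : Set M) := by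
      by_contra h
      push_neg at h
      exact hne (Submodule.eq_top_iff'.mpr h)
    classical
    have hxmem : x ∈ N ⊔ Submodule.span R (↑(insert x s) : Set M) := by
      apply Submodule.mem_sup_right
      exact Submodule.subset_span (by simp)
    have hle : N ⊔ Submodule.span R (↑s : Set M)
        ≤ N ⊔ Submodule.span R (↑(insert x s) : Set M) := by
      apply sup_le_sup_left
      apply Submodule.span_mono
      simp only [Finset.coe_insert]
      exact Set.subset_insert _ _
    have hltnew : N ⊔ Submodule.span R (↑s : Set M)
        < N ⊔ Submodule.span R (↑(insert x s) : Set M) := by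
      refine lt_of_le_of_ne hle (fun heq => ?_)
      rw [← heq] at hxmem
      exact hx hxmem
    refine ⟨c ++ [N ⊔ Submodule.span R (↑(insert x s) : Set M)], insert x s, ?_, ?_, ?_, ?_⟩
    · simp [hlen]
    · rw [List.Chain', List.isChain_append]
      refine ⟨hch, List.isChain_singleton _, ?_⟩
      intro P hP y hy
      rw [hlast, Option.mem_some_iff] at hP
      simp only [List.head?_cons, Option.mem_some_iff] at hy
      subst hP
      subst hy
      exact ⟨le_sup_left, hltnew⟩
    · rw [List.getLast?_concat]
    · calc (insert x s).card ≤ s.card + 1 := Finset.card_insert_le _ _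
        _ ≤ i + 1 := by omega

end AuxProp21

end HKPaper
open HKPaper IsLocalRing in
/-- Proposition 2.1, rank lemma. -/
theorem statement_0 {R : Type} [CommRing R] [IsLocalRing R] [IsNoetherianRing R] [IsDomain R]
    (J : Ideal R) (hJcl : IdealIsIntegrallyClosed R J) (hJpr : IsMPrimary R J)
    (u : R) (hu : u ∈ Submodule.colon (J : Submodule R R) (maximalIdeal R)) (hunotJ : u ∉ J)
    (I : Ideal R) (hI : I = J ⊔ Ideal.span {u})
    (M : Type) [AddCommGroup M] [Module R M] [Module.Finite R M] [NoZeroSMulDivisors R M] :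
    (genRank R M : ℕ∞) ≤
      mLength R (subQuot R (I • (⊤ : Submodule R M)) (J • (⊤ : Submodule R M))) := by
  classical
  set n := genRank R M with hn
  set N : Submodule R M :=
    Submodule.comap ((LinearMap.lsmul R M) u) (J • (⊤ : Submodule R M)) with hN
  -- the map `x ↦ u • x` into the subquotient
  have hmem : ∀ x : M, ((LinearMap.lsmul R M) u) x ∈ I • (⊤ : Submodule R M) := by
    intro x
    have huI : u ∈ I := by
      rw [hI]
      exact Ideal.mem_sup_right (Ideal.subset_span rfl)
    exact Submodule.smul_mem_smul huI trivial
  set θ : M →ₗ[R] subQuot R (I • (⊤ : Submodule R M)) (J • (⊤ : Submodule R M)) :=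
    (Submodule.mkQ _).comp
      (LinearMap.codRestrict (I • (⊤ : Submodule R M)) ((LinearMap.lsmul R M) u) hmem)
    with hθ
  have hker : LinearMap.ker θ ≤ N := by
    intro z hz
    rw [LinearMap.mem_ker, hθ, LinearMap.comp_apply, Submodule.mkQ_apply,
      Submodule.Quotient.mk_eq_zero, Submodule.mem_comap] at hz
    exact hz
  -- build the chain
  have hcore : ∀ s : Finset M, s.card < n →
      N ⊔ Submodule.span R (↑s : Set M) ≠ ⊤ := by
    intro s hs
    exact aux_core' J hJcl u hunotJ M s hs
  obtain ⟨c, s, hlen, hch, -, -⟩ := aux_chain N n hcore n le_rfl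
  have hmaplt : ∀ P Q : Submodule R M, N ≤ P → P < Q →
      Submodule.map θ P < Submodule.map θ Q := by
    intro P Q hNP hPQ
    refine lt_of_le_of_ne (Submodule.map_mono hPQ.le) (fun heq => ?_)
    have h1 := congrArg (Submodule.comap θ) heq
    rw [Submodule.comap_map_eq, Submodule.comap_map_eq,
      sup_of_le_left (hker.trans hNP), sup_of_le_left (hker.trans (hNP.trans hPQ.le))] at h1
    exact hPQ.ne h1
  set l := c.map (Submodule.map θ) with hl
  have hlch : l.Chain' (· < ·) := by
    rw [hl, List.Chain', List.isChain_map]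
    exact (hch : List.IsChain _ c).imp (fun a b hab => hmaplt a b hab.1 hab.2)
  have hlen' : l.length = n + 1 := by
    rw [hl, List.length_map, hlen]
  have hfinal : ((n + 1 : ℕ) : ℕ∞) ≤
      mLength R (subQuot R (I • (⊤ : Submodule R M)) (J • (⊤ : Submodule R M))) := by
    rw [mLength]
    have hpw : l.Pairwise (· < ·) := hlch.pairwise
    have hnd : l.Nodup := hpw.imp (fun h => ne_of_lt h)
    haveI : Std.Symm (fun a b : Submodule R (subQuot R (I • (⊤ : Submodule R M))
        (J • (⊤ : Submodule R M))) => a < b ∨ b < a) := ⟨fun _ _ h => h.symm⟩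
    have hc : IsChain (· < ·) {x | x ∈ l} := fun x hx y hy hxy =>
      (hpw.imp (fun h => Or.inl h)).forall (R := fun a b => a < b ∨ b < a) hx hy hxy
    calc ((n + 1 : ℕ) : ℕ∞) = ({x | x ∈ l} : Set _).encard := by
          rw [← List.coe_toFinset, Set.encard_coe_eq_coe_finsetCard,
            List.toFinset_card_of_nodup hnd, hlen']
      _ ≤ _ := Set.encard_le_chainHeight_of_isChain _ _ (Set.subset_univ _) hc
  refine le_trans ?_ hfinal
  exact_mod_cast Nat.le_succ n
end

section
/- Let (R, m) be a Cohen-Macaulay normal Noetherian local domain, x ∈ m \ m² an element that is part of a system of parameters x = x_1, x_2, ..., x_d generating a minimal reduction of m, and suppose x^j ∈ the integral closure of m^n for some 1 ≤ j < n. Then x^{jl} ∈ (x_1,...,x_d)^{n(l-t)} for some fixed t and all l ≫ 0, which is impossible; hence x^j ∉ integral closure of m^n whenever j < n. -/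
/- Common definitions for the formalization of
   "Bounds on the Hilbert-Kunz Multiplicity" (Celikbas–Dao–Huneke–Zhang). -/

open IsLocalRing Filter Polynomial

namespace S8Aux

open IsLocalRing

universe u

lemma isArtinian_of_surjective_tower {R S M : Type*} [CommRing R] [Ring S] [AddCommGroup M]
    [Algebra R S] [Module S M] [Module R M] [IsScalarTower R S M]
    (hsurj : Function.Surjective (algebraMap R S)) (h : IsArtinian S M) : IsArtinian R M := by
  rw [isArtinian_iff] at h ⊢
  let f : Submodule R M → Submodule S M := fun N =>
    { carrier := N
      add_mem' := fun ha hb => N.add_mem ha hb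
      zero_mem' := N.zero_mem
      smul_mem' := by
        intro c x hx
        obtain ⟨r, rfl⟩ := hsurj c
        rw [algebraMap_smul]
        exact N.smul_mem r hx }
  have hmono : ∀ {N₁ N₂ : Submodule R M}, N₁ < N₂ → f N₁ < f N₂ := by
    intro N₁ N₂ hlt
    refine SetLike.lt_iff_le_and_exists.mpr ?_
    obtain ⟨hle, z, hz₂, hz₁⟩ := SetLike.lt_iff_le_and_exists.mp hlt
    exact ⟨fun t ht => hle ht, z, hz₂, hz₁⟩
  exact Subrelation.wf (fun {a b} hab => hmono hab) (InvImage.wf f h)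

/-- A Noetherian module over a local ring killed by a power of the maximal ideal is Artinian. -/
lemma isArtinian_of_pow_smul_eq_bot {S : Type*} [CommRing S] [IsLocalRing S]
    {M : Type*} [AddCommGroup M] [Module S M] [IsNoetherian S M] :
    ∀ (c : ℕ), (maximalIdeal S) ^ c • (⊤ : Submodule S M) = ⊥ → IsArtinian S M := by
  intro c
  induction c generalizing M with
  | zero =>
    intro h
    rw [pow_zero, Ideal.one_eq_top, Submodule.top_smul] at h
    have : Subsingleton M := by
      constructor
      intro a b
      have ha : a ∈ (⊥ : Submodule S M) := h ▸ Submodule.mem_top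
      have hb : b ∈ (⊥ : Submodule S M) := h ▸ Submodule.mem_top
      rw [Submodule.mem_bot] at ha hb; rw [ha, hb]
    infer_instance
  | succ c ih =>
    intro h
    set n := maximalIdeal S with hn
    set N : Submodule S M := n • ⊤ with hN
    -- N is Artinian
    have hNkill : (n ^ c) • (⊤ : Submodule S N) = ⊥ := by
      have hmap : ((n ^ c) • (⊤ : Submodule S N)).map N.subtype = (n ^ c) • N := by
        rw [Submodule.map_smul'', Submodule.map_top, Submodule.range_subtype]
      have : (n ^ c) • N = ⊥ := by
        rw [hN, ← Submodule.smul_assoc, smul_eq_mul, ← pow_succ]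
        exact h
      rw [this] at hmap
      have := Submodule.map_injective_of_injective N.injective_subtype
      apply this
      rw [hmap, Submodule.map_bot]
    have hArtN : IsArtinian S N := ih hNkill
    -- M/N is Artinian
    have hkill : ∀ r ∈ n, ∀ m : M ⧸ N, r • m = 0 := by
      intro r hr m
      obtain ⟨y, rfl⟩ := Submodule.Quotient.mk_surjective N m
      rw [← Submodule.Quotient.mk_smul, Submodule.Quotient.mk_eq_zero]
      exact Submodule.smul_mem_smul hr Submodule.mem_top
    have hArtQ : IsArtinian S (M ⧸ N) := by
      letI : Field (S ⧸ n) := Ideal.Quotient.field n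
      haveI hNoeth : IsNoetherian (S ⧸ n) (M ⧸ N) := isNoetherian_of_tower S inferInstance
      haveI : Module.Finite (S ⧸ n) (M ⧸ N) := Module.Finite.of_restrictScalars_finite S _ _
      haveI : IsArtinian (S ⧸ n) (M ⧸ N) := inferInstance
      exact isArtinian_of_surjective_tower Ideal.Quotient.mk_surjective this
    exact isArtinian_of_range_eq_ker N.subtype N.mkQ (by
      rw [Submodule.range_subtype, Submodule.ker_mkQ])


/-- Krull's principal ideal theorem, local form: if the maximal ideal of a Noetherian
local ring is minimal over a principal ideal, there is no chain `Q' < Q < maximalIdeal`. -/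
lemma pit_local {S : Type*} [CommRing S] [IsLocalRing S] [IsNoetherianRing S]
    (x : S) (hx : x ∈ maximalIdeal S)
    (hmin : ∀ q : Ideal S, q.IsPrime → x ∈ q → q = maximalIdeal S)
    {Q Q' : Ideal S} (hQ : Q.IsPrime) (hQ' : Q'.IsPrime)
    (h1 : Q' < Q) (h2 : Q < maximalIdeal S) : False := by
  have hxQ : x ∉ Q := fun h => (ne_of_lt h2) (hmin Q hQ h)
  -- the radical of (x) is the maximal ideal
  have hrad : (Ideal.span {x}).radical = maximalIdeal S := by
    rw [Ideal.radical_eq_sInf]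
    apply le_antisymm
    · exact sInf_le ⟨(Ideal.span_singleton_le_iff_mem _).mpr hx, inferInstance⟩
    · refine le_sInf ?_
      rintro J ⟨hJle, hJprime⟩
      rw [hmin J hJprime (hJle (Ideal.subset_span rfl))]
  obtain ⟨c, hc⟩ : ∃ c, (maximalIdeal S) ^ c ≤ Ideal.span {x} := by
    obtain ⟨c, hc⟩ := Ideal.exists_radical_pow_le_of_fg (Ideal.span {x})
      (IsNoetherian.noetherian _)
    exact ⟨c, by rwa [hrad] at hc⟩
  -- symbolic powers of Q
  set L := Localization.AtPrime Q with hL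
  letI : Algebra S L := inferInstance
  set φ := algebraMap S L with hφ
  set symb : ℕ → Ideal S := fun k => Ideal.comap φ (Ideal.map φ (Q ^ k)) with hsymb
  have hanti : ∀ {k m : ℕ}, k ≤ m → symb m ≤ symb k := by
    intro k m hkm
    exact Ideal.comap_mono (Ideal.map_mono (Ideal.pow_le_pow_right hkm))
  have hprimary : ∀ {a r : S} {k : ℕ}, a ∉ Q → a * r ∈ symb k → r ∈ symb k := by
    intro a r k haQ har
    have hu : IsUnit (φ a) := (IsLocalization.AtPrime.isUnit_to_map_iff L Q a).mpr haQ
    have : φ r = ↑hu.unit⁻¹ * φ (a * r) := by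
      rw [map_mul, ← mul_assoc, IsUnit.val_inv_mul, one_mul]
    have hmem : ↑hu.unit⁻¹ * φ (a * r) ∈ Ideal.map φ (Q ^ k) :=
      Ideal.mul_mem_left _ _ har
    rw [hsymb]; simp only [Ideal.mem_comap]
    rw [this]; exact hmem
  -- S/(x) is Artinian
  set I : Ideal S := Ideal.span {x} with hI
  haveI hart : IsArtinian S (S ⧸ I) := by
    apply isArtinian_of_pow_smul_eq_bot (c := c)
    rw [eq_bot_iff]
    refine Submodule.smul_le.mpr ?_
    intro r hr m _
    obtain ⟨y, rfl⟩ := Submodule.Quotient.mk_surjective I m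
    rw [Submodule.mem_bot, ← Submodule.Quotient.mk_smul, Submodule.Quotient.mk_eq_zero]
    rw [smul_eq_mul]
    exact I.mul_mem_right y (hc hr)
  -- the images of the symbolic powers in S/(x) stabilize
  obtain ⟨k, hk⟩ := IsArtinian.monotone_stabilizes (R := S) (M := S ⧸ I)
    ⟨fun k => (Submodule.map I.mkQ (symb k) : Submodule S (S ⧸ I)),
     fun k m hkm => by exact Submodule.map_mono (hanti hkm)⟩
  have hstab : Submodule.map I.mkQ (symb k) = Submodule.map I.mkQ (symb (k + 1)) :=
    hk (k + 1) (Nat.le_succ k)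
  -- symb k ≤ symb (k+1) ⊔ I
  have hle : symb k ≤ symb (k + 1) ⊔ I := by
    have : (symb k : Submodule S S) ≤ Submodule.comap I.mkQ (Submodule.map I.mkQ (symb k)) :=
      Submodule.le_comap_map _ _
    rw [hstab, Submodule.comap_map_eq, Submodule.ker_mkQ] at this
    exact this
  -- refine to symb k ≤ symb (k+1) ⊔ I * symb k
  have hle2 : symb k ≤ symb (k + 1) ⊔ I • (symb k) := by
    intro s hs
    obtain ⟨t, ht, w, hw, rfl⟩ := Submodule.mem_sup.mp (hle hs)
    obtain ⟨r, rfl⟩ := Ideal.mem_span_singleton'.mp hw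
    have hxr : x * (r : S) ∈ symb k := by
      have h1' : r * x = (t + r * x) - t := by ring
      rw [mul_comm]
      rw [h1']
      exact Submodule.sub_mem _ hs (hanti (Nat.le_succ k) ht)
    have hr : r ∈ symb k := hprimary hxQ hxr
    refine Submodule.add_mem_sup ht ?_
    rw [smul_eq_mul, show r * x = x * r from mul_comm r x]
    exact Ideal.mul_mem_mul (Ideal.mem_span_singleton_self x) hr
  -- Nakayama: symb k = symb (k+1)
  have hIjac : I ≤ Ideal.jacobson ⊥ :=
    le_trans ((Ideal.span_singleton_le_iff_mem _).mpr hx) (maximalIdeal_le_jacobson ⊥)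
  have hN : symb k ≤ symb (k + 1) :=
    Submodule.le_of_le_smul_of_le_jacobson_bot (IsNoetherian.noetherian _) hIjac hle2
  have heq : symb k = symb (k + 1) := le_antisymm hN (hanti (Nat.le_succ k))
  -- map to L: (map φ Q)^k = (map φ Q)^(k+1)
  have hmapeq : (Ideal.map φ Q) ^ k = (Ideal.map φ Q) ^ (k + 1) := by
    have h1' := congrArg (Ideal.map φ) heq
    rw [hsymb] at h1'
    simp only at h1'
    rwa [IsLocalization.map_comap Q.primeCompl L,
      IsLocalization.map_comap Q.primeCompl L, Ideal.map_pow, Ideal.map_pow] at h1'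
  -- Nakayama in L: (map φ Q)^k = ⊥
  haveI : IsNoetherianRing L := IsLocalization.isNoetherianRing Q.primeCompl L ‹_›
  have hQL_prime : (Ideal.map φ Q).IsPrime :=
    IsLocalization.isPrime_of_isPrime_disjoint Q.primeCompl L Q hQ
      (Set.disjoint_left.mpr fun a ha ha' => ha ha')
  have hQL_ne_top : Ideal.map φ Q ≠ ⊤ := hQL_prime.ne_top
  have hQL_le : Ideal.map φ Q ≤ maximalIdeal L := le_maximalIdeal hQL_ne_top
  have hbot : (Ideal.map φ Q) ^ k = ⊥ := by
    apply Submodule.eq_bot_of_le_smul_of_le_jacobson_bot (maximalIdeal L)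
    · exact IsNoetherian.noetherian _
    · calc (Ideal.map φ Q) ^ k = (Ideal.map φ Q) ^ (k+1) := hmapeq
        _ = (Ideal.map φ Q) • (Ideal.map φ Q) ^ k := by
            rw [smul_eq_mul, ← pow_succ']
        _ ≤ (maximalIdeal L) • (Ideal.map φ Q) ^ k :=
            Submodule.smul_mono_left hQL_le
    · exact maximalIdeal_le_jacobson ⊥
  -- transfer Q' < Q to L and contradict
  have hQ'L_prime : (Ideal.map φ Q').IsPrime :=
    IsLocalization.isPrime_of_isPrime_disjoint Q.primeCompl L Q' hQ'
      (Set.disjoint_left.mpr fun a ha ha' => ha (le_of_lt h1 ha'))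
  have hpow_le : (Ideal.map φ Q) ^ k ≤ Ideal.map φ Q' := hbot ▸ bot_le
  have hkne : k ≠ 0 := by
    rintro rfl
    rw [pow_zero, Ideal.one_eq_top] at hbot
    have h1L : (1 : L) ∈ (⊥ : Ideal L) := hbot ▸ Submodule.mem_top
    rw [Submodule.mem_bot] at h1L
    exact one_ne_zero h1L
  have hQleQ' : Ideal.map φ Q ≤ Ideal.map φ Q' :=
    (Ideal.IsPrime.pow_le_iff hkne).mp hpow_le
  have : Q ≤ Q' := by
    have h1' := Ideal.comap_mono (f := φ) hQleQ'
    rwa [show Ideal.comap φ (Ideal.map φ Q) = Q from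
        IsLocalization.comap_map_of_isPrime_disjoint Q.primeCompl L (I := Q) hQ
        (Set.disjoint_left.mpr fun a ha ha' => ha ha'),
      show Ideal.comap φ (Ideal.map φ Q') = Q' from
      IsLocalization.comap_map_of_isPrime_disjoint Q.primeCompl L (I := Q') hQ'
        (Set.disjoint_left.mpr fun a ha ha' => ha (le_of_lt h1 ha'))] at h1'
  exact (not_le_of_gt h1) this


/-- comap of quotient map recovers ideals over the kernel -/
lemma comap_map_quot {R : Type u} [CommRing R] (J : Ideal R) {P : Ideal R} (hJP : J ≤ P) :
    Ideal.comap (Ideal.Quotient.mk J) (Ideal.map (Ideal.Quotient.mk J) P) = P := by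
  rw [Ideal.comap_map_of_surjective _ Ideal.Quotient.mk_surjective]
  have : Ideal.comap (Ideal.Quotient.mk J) ⊥ = J := by
    rw [← RingHom.ker_eq_comap_bot, Ideal.mk_ker]
  rw [this, sup_eq_left.mpr hJP]

lemma map_quot_lt {R : Type u} [CommRing R] (J : Ideal R) {P P' : Ideal R}
    (hJP' : J ≤ P') (hJP : J ≤ P) (h : P' < P) :
    Ideal.map (Ideal.Quotient.mk J) P' < Ideal.map (Ideal.Quotient.mk J) P := by
  refine lt_of_le_of_ne (Ideal.map_mono h.le) (fun he => ?_)
  have := congrArg (Ideal.comap (Ideal.Quotient.mk J)) he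
  rw [comap_map_quot J hJP', comap_map_quot J hJP] at this
  exact h.ne this

lemma map_quot_isPrime {R : Type u} [CommRing R] (J : Ideal R) {P : Ideal R}
    (hJP : J ≤ P) (hP : P.IsPrime) : (Ideal.map (Ideal.Quotient.mk J) P).IsPrime :=
  Ideal.map_isPrime_of_surjective Ideal.Quotient.mk_surjective
    (by rwa [Ideal.mk_ker])

/-- Relative principal ideal theorem: if `p₀` is minimal over `p₂ ⊔ (x)`,
there is no chain `p₂ < p₁ < p₀` of primes. -/
lemma pit_rel {R : Type u} [CommRing R] [IsNoetherianRing R] (x : R)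
    {p₀ p₁ p₂ : Ideal R} (h₀ : p₀.IsPrime) (h₁ : p₁.IsPrime) (h₂ : p₂.IsPrime)
    (h01 : p₁ < p₀) (h12 : p₂ < p₁)
    (hmin : p₀ ∈ (p₂ ⊔ Ideal.span {x}).minimalPrimes) : False := by
  classical
  set π := Ideal.Quotient.mk p₂ with hπ
  set Rb := R ⧸ p₂ with hRb
  have hker : RingHom.ker π = p₂ := Ideal.mk_ker
  have h2le1 : p₂ ≤ p₁ := h12.le
  have h2le0 : p₂ ≤ p₀ := h12.le.trans h01.le
  have hxp₀ : x ∈ p₀ := hmin.1.2 (Ideal.mem_sup_right (Ideal.mem_span_singleton_self x))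
  set pb₀ := Ideal.map π p₀ with hpb₀
  set pb₁ := Ideal.map π p₁ with hpb₁
  set pb₂ := Ideal.map π p₂ with hpb₂
  have hpb₀p : pb₀.IsPrime := map_quot_isPrime p₂ h2le0 h₀
  have hpb₁p : pb₁.IsPrime := map_quot_isPrime p₂ h2le1 h₁
  have hpb₂p : pb₂.IsPrime := map_quot_isPrime p₂ le_rfl h₂
  have hlt01 : pb₁ < pb₀ := map_quot_lt p₂ h2le1 h2le0 h01
  have hlt12 : pb₂ < pb₁ := map_quot_lt p₂ le_rfl h2le1 h12
  -- localize Rb at pb₀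
  haveI : pb₀.IsPrime := hpb₀p
  set S := Localization.AtPrime pb₀ with hS
  set ψ := algebraMap Rb S with hψ
  haveI : IsNoetherianRing Rb := inferInstance
  haveI : IsNoetherianRing S := IsLocalization.isNoetherianRing pb₀.primeCompl S ‹_›
  have hdisj : ∀ {q : Ideal Rb}, q ≤ pb₀ → Disjoint (pb₀.primeCompl : Set Rb) (q : Set Rb) :=
    fun {q} hq => Set.disjoint_left.mpr fun a ha ha' => ha (hq ha')
  have hQ₁p : (Ideal.map ψ pb₁).IsPrime :=
    IsLocalization.isPrime_of_isPrime_disjoint pb₀.primeCompl S pb₁ hpb₁p (hdisj hlt01.le)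
  have hQ₂p : (Ideal.map ψ pb₂).IsPrime :=
    IsLocalization.isPrime_of_isPrime_disjoint pb₀.primeCompl S pb₂ hpb₂p
      (hdisj (hlt12.le.trans hlt01.le))
  have hcomap₁ : Ideal.comap ψ (Ideal.map ψ pb₁) = pb₁ :=
    IsLocalization.comap_map_of_isPrime_disjoint pb₀.primeCompl S (I := pb₁) hpb₁p (hdisj hlt01.le)
  have hcomap₂ : Ideal.comap ψ (Ideal.map ψ pb₂) = pb₂ :=
    IsLocalization.comap_map_of_isPrime_disjoint pb₀.primeCompl S (I := pb₂) hpb₂p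
      (hdisj (hlt12.le.trans hlt01.le))
  have hcomapMax : Ideal.comap ψ (maximalIdeal S) = pb₀ :=
    IsLocalization.AtPrime.comap_maximalIdeal S pb₀
  -- x in the maximal ideal of S
  have hxmem : ψ (π x) ∈ maximalIdeal S :=
    (IsLocalization.AtPrime.to_map_mem_maximal_iff S pb₀ (π x)).mpr
      (Ideal.mem_map_of_mem π hxp₀)
  -- every prime containing ψ (π x) is the maximal ideal
  have hminS : ∀ q : Ideal S, q.IsPrime → ψ (π x) ∈ q → q = maximalIdeal S := by
    intro q hq hxq
    have hqb : (Ideal.comap ψ q).IsPrime ∧ Disjoint (pb₀.primeCompl : Set Rb) _ :=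
      (IsLocalization.isPrime_iff_isPrime_disjoint pb₀.primeCompl S q).mp hq
    set qb := Ideal.comap ψ q with hqb'
    have hqble : qb ≤ pb₀ := by
      intro a ha
      by_contra hnot
      exact Set.disjoint_left.mp hqb.2 hnot ha
    set q' := Ideal.comap π qb with hq''
    have hq'p : q'.IsPrime := hqb.1.comap π
    have hq'le : q' ≤ p₀ := by
      have := Ideal.comap_mono (f := π) hqble
      rwa [comap_map_quot p₂ h2le0] at this
    have hq'ge : p₂ ⊔ Ideal.span {x} ≤ q' := by
      refine sup_le ?_ ?_
      · intro a ha
        have : π a = 0 := Ideal.Quotient.eq_zero_iff_mem.mpr ha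
        simp only [hq'', Ideal.mem_comap, this]
        exact qb.zero_mem
      · rw [Ideal.span_singleton_le_iff_mem]
        simp only [hq'', Ideal.mem_comap]
        exact hxq
    have : p₀ ≤ q' := hmin.2 ⟨hq'p, hq'ge⟩ hq'le
    have hq'eq : q' = p₀ := le_antisymm hq'le this
    -- conclude q = maximalIdeal S
    have hqb_eq : qb = pb₀ := by
      have h5 : Ideal.map π q' = qb := Ideal.map_comap_of_surjective π
        Ideal.Quotient.mk_surjective qb
      rw [hq'eq] at h5
      exact h5.symm
    calc q = Ideal.map ψ qb := (IsLocalization.map_comap pb₀.primeCompl S q).symm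
      _ = Ideal.map ψ pb₀ := congrArg (Ideal.map ψ) hqb_eq
      _ = maximalIdeal S := by
          have h6 := IsLocalization.map_comap pb₀.primeCompl S (maximalIdeal S)
          rw [show Ideal.under Rb (maximalIdeal S) = pb₀ from hcomapMax] at h6
          exact h6
  -- strict chain in S
  have hQ₁lt : Ideal.map ψ pb₁ < maximalIdeal S := by
    refine lt_of_le_of_ne (le_maximalIdeal hQ₁p.ne_top) (fun he => ?_)
    have := congrArg (Ideal.comap ψ) he
    rw [hcomap₁, hcomapMax] at this
    exact hlt01.ne this
  have hQ₂lt : Ideal.map ψ pb₂ < Ideal.map ψ pb₁ := by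
    refine lt_of_le_of_ne (Ideal.map_mono hlt12.le) (fun he => ?_)
    have := congrArg (Ideal.comap ψ) he
    rw [hcomap₁, hcomap₂] at this
    exact hlt12.ne this
  exact pit_local (ψ (π x)) hxmem hminS hQ₁p hQ₂p hQ₂lt hQ₁lt


/-- Exchange lemma: in a chain `p₂ < p₁ < p₀` with `x ∈ p₀`, the middle prime can
be replaced by one containing `x`. -/
lemma exchange {R : Type u} [CommRing R] [IsNoetherianRing R] (x : R)
    {p₀ p₁ p₂ : Ideal R} (h₀ : p₀.IsPrime) (h₁ : p₁.IsPrime) (h₂ : p₂.IsPrime)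
    (h01 : p₁ < p₀) (h12 : p₂ < p₁) (hx : x ∈ p₀) :
    ∃ q : Ideal R, q.IsPrime ∧ x ∈ q ∧ p₂ < q ∧ q < p₀ := by
  by_cases hxp₁ : x ∈ p₁
  · exact ⟨p₁, h₁, hxp₁, h12, h01⟩
  · have hxp₂ : x ∉ p₂ := fun h => hxp₁ (h12.le h)
    have hle : p₂ ⊔ Ideal.span {x} ≤ p₀ :=
      sup_le (h12.le.trans h01.le) ((Ideal.span_singleton_le_iff_mem _).mpr hx)
    haveI := h₀
    obtain ⟨q, hqmin, hqle⟩ := Ideal.exists_minimalPrimes_le hle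
    have hqprime : q.IsPrime := hqmin.1.1
    have hxq : x ∈ q := hqmin.1.2 (Ideal.mem_sup_right (Ideal.mem_span_singleton_self x))
    have hq2 : p₂ < q := lt_of_le_of_ne (le_trans le_sup_left hqmin.1.2) (fun h => hxp₂ (h ▸ hxq))
    refine ⟨q, hqprime, hxq, hq2, lt_of_le_of_ne hqle (fun h => ?_)⟩
    subst h
    exact pit_rel x h₀ h₁ h₂ h01 h12 hqmin

/-- Chains of primes can be modified (keeping endpoints) so that all middle members
contain a given element of the top. -/
lemma chain_fix {R : Type u} [CommRing R] [IsNoetherianRing R] (x : R) :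
    ∀ (m : ℕ) (ch : ℕ → Ideal R), (∀ i, i ≤ m → (ch i).IsPrime) →
    (∀ i, i < m → ch (i + 1) < ch i) → x ∈ ch 0 →
    ∃ ch' : ℕ → Ideal R, ch' 0 = ch 0 ∧ ch' m = ch m ∧ (∀ i, i ≤ m → (ch' i).IsPrime) ∧
      (∀ i, i < m → ch' (i + 1) < ch' i) ∧ (∀ i, i < m → x ∈ ch' i) := by
  intro m
  induction m with
  | zero => exact fun ch hp hd hx => ⟨ch, rfl, rfl, hp, hd, fun i h => absurd h (Nat.not_lt_zero i)⟩
  | succ m ih =>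
    intro ch hp hd hx
    match m with
    | 0 =>
      exact ⟨ch, rfl, rfl, hp, hd, fun i hi => by
        interval_cases i
        exact hx⟩
    | Nat.succ m' =>
      -- m + 1 = m' + 2 ≥ 2 : apply exchange at the top triple
      obtain ⟨q, hqp, hxq, hq2, hq0⟩ := exchange x (hp 0 (Nat.zero_le _))
        (hp 1 (by omega)) (hp 2 (by omega))
        (hd 0 (by omega)) (hd 1 (by omega)) hx
      -- new chain dropping the old top, starting at q
      set ch₁ : ℕ → Ideal R := fun i => if i = 0 then q else ch (i + 1) with hch₁
      have h₁p : ∀ i, i ≤ m' + 1 → (ch₁ i).IsPrime := by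
        intro i hi
        by_cases h : i = 0
        · simp [hch₁, h, hqp]
        · simp only [hch₁, if_neg h]
          exact hp (i + 1) (by omega)
      have h₁d : ∀ i, i < m' + 1 → ch₁ (i + 1) < ch₁ i := by
        intro i hi
        by_cases h : i = 0
        · subst h
          simp only [hch₁, if_neg (Nat.one_ne_zero), if_pos rfl]
          exact hq2
        · simp only [hch₁, if_neg h, if_neg (Nat.succ_ne_zero i)]
          exact hd (i + 1) (by omega)
      have h₁x : x ∈ ch₁ 0 := by simp [hch₁, hxq]
      obtain ⟨ch'', h''0, h''m, h''p, h''d, h''x⟩ := ih ch₁ h₁p h₁d h₁x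
      refine ⟨fun i => if i = 0 then ch 0 else ch'' (i - 1), by simp, ?_, ?_, ?_, ?_⟩
      · simp only [if_neg (Nat.succ_ne_zero (m' + 1))]
        rw [show m' + 1 + 1 - 1 = m' + 1 from rfl, h''m]
        simp only [hch₁, if_neg (Nat.succ_ne_zero m')]
      · intro i hi
        by_cases h : i = 0
        · simpa [h] using hp 0 (Nat.zero_le _)
        · simp only [if_neg h]
          exact h''p (i - 1) (by omega)
      · intro i hi
        by_cases h : i = 0
        · subst h
          simp only [if_neg (Nat.one_ne_zero), if_pos rfl]
          rw [show (1 : ℕ) - 1 = 0 from rfl, h''0]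
          simp only [hch₁, if_pos rfl]
          exact hq0
        · simp only [if_neg h, if_neg (Nat.succ_ne_zero i)]
          rw [show i + 1 - 1 = (i - 1) + 1 by omega]
          exact h''d (i - 1) (by omega)
      · intro i hi
        by_cases h : i = 0
        · simpa [h] using hx
        · simp only [if_neg h]
          rcases Nat.lt_or_ge (i - 1) (m' + 1) with hlt | hge
          · exact h''x (i - 1) hlt
          · -- i - 1 = m' + 1 impossible since i < m' + 2
            omega


/-- **Krull's height theorem**: a descending chain of primes starting at a prime minimal
over an ideal generated by `c` elements has length at most `c`. -/
theorem height_le : ∀ (c : ℕ), ∀ {R : Type u} [CommRing R] [IsNoetherianRing R],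
    ∀ (s : Finset R), s.card ≤ c → ∀ {p : Ideal R},
    p ∈ (Ideal.span (s : Set R)).minimalPrimes → ∀ (n : ℕ) (ch : ℕ → Ideal R),
    (∀ i, i ≤ n → (ch i).IsPrime) → (∀ i, i < n → ch (i + 1) < ch i) → ch 0 = p →
    n ≤ c := by
  intro c
  induction c with
  | zero =>
    intro R _ _ s hcard p hp n ch hprime hdesc h0
    by_contra hn
    push_neg at hn
    have hs : s = ∅ := Finset.card_eq_zero.mp (Nat.le_zero.mp hcard)
    have hbot : Ideal.span (s : Set R) = ⊥ := by
      rw [hs]; simp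
    have h1lt : ch 1 < p := h0 ▸ hdesc 0 hn
    have : p ≤ ch 1 := hp.2 ⟨hprime 1 hn, hbot ▸ bot_le⟩ h1lt.le
    exact (not_le_of_gt h1lt) this
  | succ c ih =>
    intro R _ _ s hcard p hp n ch hprime hdesc h0
    classical
    match n with
    | 0 => exact Nat.zero_le _
    | Nat.succ n' =>
      -- s is nonempty, otherwise the chain has length 0 as in the base case
      rcases Finset.eq_empty_or_nonempty s with rfl | ⟨a, ha⟩
      · exfalso
        have hbot : Ideal.span ((∅ : Finset R) : Set R) = ⊥ := by simp
        have h1lt : ch 1 < p := h0 ▸ hdesc 0 (Nat.succ_pos n')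
        have : p ≤ ch 1 := hp.2 ⟨hprime 1 (Nat.succ_pos n'), hbot ▸ bot_le⟩ h1lt.le
        exact (not_le_of_gt h1lt) this
      · have hap : a ∈ p := hp.1.2 (Ideal.subset_span (by exact_mod_cast ha))
        -- fix the chain so that entries 0..n'-? contain a
        obtain ⟨ch', h'0, h'n, h'p, h'd, h'x⟩ := chain_fix a (n' + 1) ch hprime hdesc
          (h0 ▸ hap)
        -- quotient by (a)
        set J : Ideal R := Ideal.span {a} with hJ
        set π := Ideal.Quotient.mk J with hπ
        have hJle : ∀ i, i < n' + 1 → J ≤ ch' i := fun i hi =>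
          (Ideal.span_singleton_le_iff_mem _).mpr (h'x i hi)
        have hJp : J ≤ p := (Ideal.span_singleton_le_iff_mem _).mpr hap
        have h'0p : ch' 0 = p := h'0.trans h0
        -- the quotient chain
        set chb : ℕ → Ideal (R ⧸ J) := fun i => Ideal.map π (ch' i) with hchb
        have hchbp : ∀ i, i ≤ n' → (chb i).IsPrime := fun i hi =>
          map_quot_isPrime J (hJle i (by omega)) (h'p i (by omega))
        have hchbd : ∀ i, i < n' → chb (i + 1) < chb i := fun i hi =>
          map_quot_lt J (hJle (i+1) (by omega)) (hJle i (by omega)) (h'd i (by omega))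
        -- p maps to a prime minimal over the image of s.erase a
        set sb : Finset (R ⧸ J) := (s.erase a).image π with hsb
        have hcardb : sb.card ≤ c := by
          calc sb.card ≤ (s.erase a).card := Finset.card_image_le
            _ = s.card - 1 := Finset.card_erase_of_mem ha
            _ ≤ c := by omega
        have hspan : Ideal.span ((s.erase a : Finset R) : Set R) ⊔ J = Ideal.span (s : Set R) := by
          rw [hJ, ← Ideal.span_union]
          congr 1
          ext t
          simp only [Set.mem_union, Finset.coe_erase, Set.mem_diff, Set.mem_singleton_iff,
            Finset.mem_coe]
          constructor
          · rintro (⟨h1, _⟩ | rfl)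
            · exact h1
            · exact ha
          · intro ht
            by_cases h : t = a
            · exact Or.inr h
            · exact Or.inl ⟨ht, h⟩
        have hmapspan : Ideal.span ((sb : Finset (R ⧸ J)) : Set (R ⧸ J)) =
            Ideal.map π (Ideal.span ((s.erase a : Finset R) : Set R)) := by
          rw [Ideal.map_span, hsb]
          congr 1
          simp [Finset.coe_image]
        have hpb : Ideal.map π p ∈ (Ideal.span ((sb : Finset (R ⧸ J)) : Set (R ⧸ J))).minimalPrimes := by
          constructor
          · refine ⟨map_quot_isPrime J hJp hp.1.1, ?_⟩
            rw [hmapspan]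
            exact Ideal.map_mono (le_trans le_sup_left (hspan.le.trans hp.1.2) :
              Ideal.span ((s.erase a : Finset R) : Set R) ≤ p)
          · rintro qb ⟨hqbp, hqble⟩ hqb_le_pb
            set q := Ideal.comap π qb with hq
            have hqp : q.IsPrime := hqbp.comap π
            have hqJ : J ≤ q := by
              intro t ht
              have : π t = 0 := Ideal.Quotient.eq_zero_iff_mem.mpr ht
              simp only [hq, Ideal.mem_comap, this]
              exact qb.zero_mem
            have hqs : Ideal.span (s : Set R) ≤ q := by
              rw [← hspan]
              refine sup_le ?_ hqJ
              have h7 : Ideal.map π (Ideal.span ((s.erase a : Finset R) : Set R)) ≤ qb := by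
                rw [← hmapspan]; exact hqble
              have h8 := Ideal.comap_mono (f := π) h7
              refine le_trans (Ideal.le_comap_map) h8
            have hqlep : q ≤ p := by
              have := Ideal.comap_mono (f := π) hqb_le_pb
              rwa [comap_map_quot J hJp] at this
            have hpleq : p ≤ q := hp.2 ⟨hqp, hqs⟩ hqlep
            have hqeq : q = p := le_antisymm hqlep hpleq
            have h9 : Ideal.map π q = qb := Ideal.map_comap_of_surjective π
              Ideal.Quotient.mk_surjective qb
            rw [hqeq] at h9
            exact h9.le
        -- apply the induction hypothesis to the quotient chain of length n'
        have h10 : chb 0 = Ideal.map π p := by rw [hchb]; simp only; rw [h'0p]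
        have := ih sb hcardb hpb n' chb hchbp hchbd h10
        omega


lemma ps_lt {R : Type u} [CommRing R] {a b : PrimeSpectrum R} (h : a < b) :
    a.asIdeal < b.asIdeal :=
  lt_of_le_of_ne h.le (fun he => h.ne (PrimeSpectrum.ext he))

/-- binomial-type bound : `(K ⊔ (x))^s ≤ K ⊔ (x^s)` -/
lemma sup_pow_le {R : Type u} [CommRing R] (K P : Ideal R) :
    ∀ s : ℕ, (K ⊔ P) ^ s ≤ K ⊔ P ^ s := by
  intro s
  induction s with
  | zero => simp
  | succ s ih =>
    calc (K ⊔ P) ^ (s + 1) = (K ⊔ P) ^ s * (K ⊔ P) := pow_succ _ _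
      _ ≤ (K ⊔ P ^ s) * (K ⊔ P) := Ideal.mul_mono_left ih
      _ ≤ K ⊔ P ^ (s + 1) := by
          rw [Ideal.sup_mul, Ideal.mul_sup, Ideal.mul_sup]
          refine sup_le (sup_le ?_ ?_) (sup_le ?_ ?_)
          · exact le_trans Ideal.mul_le_right le_sup_left
          · exact le_trans Ideal.mul_le_left le_sup_left
          · exact le_trans Ideal.mul_le_right le_sup_left
          · rw [← pow_succ]
            exact le_sup_right


end S8Aux

open HKPaper IsLocalRing S8Aux in
/-- x^j is not integral over m^n for j < n, x part of a minimal reduction. -/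
theorem statement_8 {R : Type} [CommRing R] [IsLocalRing R] [IsNoetherianRing R] [IsDomain R]
    [IsIntegrallyClosed R] (hCM : IsCM R)
    (x : R) (hx : x ∈ maximalIdeal R) (hx2 : x ∉ maximalIdeal R ^ 2)
    (hred : ∃ xs : List R, IsMinimalReduction R (x :: xs)) :
    ∀ j n : ℕ, 1 ≤ j → j < n →
      ¬ IsIntegralOverIdeal R ((maximalIdeal R) ^ n) (x ^ j) := by
  intro j n hj hjn hint
  obtain ⟨xs, ⟨⟨hlen, hmemlist, hprimary⟩, hJle, k, hk⟩⟩ := hred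
  set m : Ideal R := maximalIdeal R with hm
  set J : Ideal R := Ideal.span {y | y ∈ x :: xs} with hJdef
  have hpr : J.radical = m := hprimary
  -- Step A : x ^ N ∈ m ^ (N + 1) for N = j * l
  obtain ⟨l, hl, a, ha, heq⟩ := hint
  set N := j * l with hN
  have hN1 : 1 ≤ N := Nat.one_le_iff_ne_zero.mpr (by positivity)
  have hstepA : x ^ N ∈ m ^ (N + 1) := by
    have hsum : ∑ i ∈ Finset.Icc 1 l, a i * (x ^ j) ^ (l - i) ∈ m ^ (N + 1) := by
      refine Submodule.sum_mem _ (fun i hi => ?_)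
      obtain ⟨hi1, hil⟩ := Finset.mem_Icc.mp hi
      have hai : a i ∈ m ^ (n * i) := by
        have h1 := ha i hi1 hil
        rwa [← pow_mul] at h1
      have hxpow : (x ^ j) ^ (l - i) ∈ m ^ (j * (l - i)) := by
        rw [← pow_mul]
        exact Ideal.pow_mem_pow hx _
      have hmul := Ideal.mul_mem_mul hai hxpow
      rw [← pow_add] at hmul
      refine Ideal.pow_le_pow_right ?_ hmul
      have h2 : j * (l - i) + j * i = j * l := by
        rw [← Nat.mul_add, Nat.sub_add_cancel hil]
      have h3 : j * i < n * i := by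
        exact Nat.mul_lt_mul_of_lt_of_le hjn (le_refl i) (by omega)
      omega
    have hneg : (x ^ j) ^ l = -∑ i ∈ Finset.Icc 1 l, a i * (x ^ j) ^ (l - i) :=
      eq_neg_of_add_eq_zero_left heq
    rw [hN, pow_mul, hneg]
    exact Submodule.neg_mem _ hsum
  -- Step B : x ^ M ∈ J ^ (M + 1) for M = N * (k + 1)
  have hpow : ∀ s : ℕ, m ^ (k + s) = J ^ s * m ^ k := by
    intro s
    induction s with
    | zero => rw [pow_zero, one_mul, Nat.add_zero]
    | succ s ih =>
      calc m ^ (k + (s + 1)) = m ^ (k + s) * m := by rw [← pow_succ, Nat.add_assoc]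
        _ = J ^ s * m ^ k * m := by rw [ih]
        _ = J ^ s * (m ^ k * m) := by rw [mul_assoc]
        _ = J ^ s * m ^ (k + 1) := by rw [← pow_succ]
        _ = J ^ s * (J * m ^ k) := by rw [hk]
        _ = J ^ (s + 1) * m ^ k := by ring
  set M := N * (k + 1) with hM
  have hM1 : 1 ≤ M := Nat.one_le_iff_ne_zero.mpr (by positivity)
  have hxJM : x ^ M ∈ J ^ (M + 1) := by
    have h2 : (x ^ N) ^ (k + 1) ∈ (m ^ (N + 1)) ^ (k + 1) := Ideal.pow_mem_pow hstepA _
    rw [← pow_mul, ← pow_mul] at h2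
    have h3 : (N + 1) * (k + 1) = k + (M + 1) := by rw [hM]; ring
    rw [h3, hpow (M + 1)] at h2
    exact Ideal.mul_le_left h2
  -- Step C : x ^ M ∈ K
  set K : Ideal R := Ideal.span {y | y ∈ xs} with hKdef
  have hJdecomp : J = K ⊔ Ideal.span {x} := by
    rw [hJdef, hKdef, ← Ideal.span_union]
    congr 1
    ext z
    simp only [Set.mem_union, Set.mem_setOf_eq, Set.mem_singleton_iff, List.mem_cons]
    tauto
  have hxK : x ^ M ∈ K := by
    have h4 : x ^ M ∈ K ⊔ Ideal.span {x} ^ (M + 1) :=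
      sup_pow_le K (Ideal.span {x}) (M + 1) (hJdecomp ▸ hxJM)
    rw [Ideal.span_singleton_pow] at h4
    obtain ⟨κ, hκ, w, hw, hsum⟩ := Submodule.mem_sup.mp h4
    obtain ⟨r, hr⟩ := Ideal.mem_span_singleton'.mp hw
    have hru : r * x ∈ nonunits R := by
      rw [← mem_maximalIdeal]
      exact m.mul_mem_left r hx
    have hu : IsUnit (1 - r * x) := isUnit_one_sub_self_of_mem_nonunits _ hru
    have hfactor : x ^ M * (1 - r * x) = κ := by
      have hκ' : κ = x ^ M - w := by rw [← hsum]; ring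
      rw [hκ', ← hr]; ring
    have h5 : x ^ M = κ * ↑hu.unit⁻¹ := by
      rw [← hfactor, mul_assoc]
      have h6 : (1 - r * x) * ↑hu.unit⁻¹ = 1 := by
        nth_rewrite 1 [← hu.unit_spec]
        exact hu.unit.mul_inv
      rw [h6, mul_one]
    rw [h5]
    exact K.mul_mem_right _ hκ
  -- Step D : radical K = m
  have hKJ : K ≤ J := hJdecomp ▸ le_sup_left
  have hKm : K ≤ m := hKJ.trans hJle
  have hmprime : m.IsPrime := (maximalIdeal.isMaximal R).isPrime
  have hKrad : K.radical = m := by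
    apply le_antisymm
    · have := Ideal.radical_mono hKm
      rwa [hmprime.radical] at this
    · rw [← hpr]
      have hJleK : J ≤ K.radical := by
        rw [hJdecomp]
        refine sup_le Ideal.le_radical ?_
        rw [Ideal.span_singleton_le_iff_mem]
        exact ⟨M, hxK⟩
      have := Ideal.radical_mono hJleK
      rwa [Ideal.radical_idem] at this
  -- Step E : m is minimal over K, generated by xs.length elements
  classical
  set s : Finset R := xs.toFinset with hsdef
  have hsspan : Ideal.span ((s : Finset R) : Set R) = K := by
    rw [hKdef]
    congr 1
    ext z
    simp [hsdef, List.mem_toFinset]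
  have hscard : s.card ≤ xs.length := xs.toFinset_card_le
  have hmmin : m ∈ (Ideal.span ((s : Finset R) : Set R)).minimalPrimes := by
    constructor
    · exact ⟨hmprime, hsspan ▸ hKm⟩
    · rintro q ⟨hqp, hqle⟩ _
      have h8 : K.radical ≤ q := hqp.radical_le_iff.mpr (hsspan ▸ hqle)
      rwa [hKrad] at h8
  -- Step F : contradiction with the dimension
  have hdim : ((xs.length + 1 : ℕ) : WithBot ℕ∞) = ringKrullDim R := by
    rw [← hlen, List.length_cons]
  have hub : ∀ F : LTSeries (PrimeSpectrum R), F.length ≤ xs.length := by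
    intro F
    set e := F.length with he
    by_cases hlast : F.last.asIdeal = m
    · refine S8Aux.height_le xs.length s hscard hmmin e
        (fun i => (F.toFun ⟨e - i, by omega⟩).asIdeal) (fun i _ => ?_) (fun i hi => ?_) ?_
      · exact (F.toFun _).isPrime
      · exact ps_lt (F.strictMono (by simp only [Fin.mk_lt_mk]; omega))
      · have hfin : (⟨e - 0, by omega⟩ : Fin (e + 1)) = Fin.last e := by
          ext; simp
        show (F.toFun ⟨e - 0, by omega⟩).asIdeal = m
        rw [hfin]
        exact hlast
    · have hlastlt : F.last.asIdeal < m :=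
        lt_of_le_of_ne (le_maximalIdeal F.last.isPrime.ne_top) hlast
      have h9 : e + 1 ≤ xs.length := by
        refine S8Aux.height_le xs.length s hscard hmmin (e + 1)
          (fun i => if i = 0 then m else (F.toFun ⟨e - (i - 1), by omega⟩).asIdeal)
          (fun i _ => ?_) (fun i hi => ?_) (by simp)
        · by_cases h : i = 0
          · simpa [h] using hmprime
          · simp only [if_neg h]
            exact (F.toFun _).isPrime
        · by_cases h : i = 0
          · subst h
            simp only [if_neg Nat.one_ne_zero, if_pos rfl]
            have hfin : (⟨e - (1 - 1), by omega⟩ : Fin (e + 1)) = Fin.last e := by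
              ext; simp
            rw [hfin]
            exact hlastlt
          · simp only [if_neg h, if_neg (Nat.succ_ne_zero i)]
            exact ps_lt (F.strictMono (by simp only [Fin.mk_lt_mk]; omega))
      omega
  have hdim_le : ringKrullDim R ≤ ((xs.length : ℕ) : WithBot ℕ∞) := by
    unfold ringKrullDim Order.krullDim
    exact iSup_le fun F => by exact_mod_cast hub F
  rw [← hdim] at hdim_le
  have : (xs.length + 1 : ℕ) ≤ (xs.length : ℕ) := by exact_mod_cast hdim_le
  omega
end
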